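/- Let (a_l)_{l≥0} be a real sequence with a_0 = 0 and ∑_{l≥0} (2l+1)|a_l| < ∞, extended by a_{−1} = 0. Define a_l^1 = (l/(2l+1))(a_{l−1} − 2a_l + a_{l+1}) + (1/(2l+1))(a_{l+1} − a_l) for l ≥ 0. Then for every θ ∈ [0, π], (cos θ − 1) · ∑_{l≥1} a_l (2l+1) P_l(cos θ) = ∑_{l≥0} a_l^1 (2l+1) P_l(cos θ), both series converging absolutely. -/
import Mathlib

open Real

/-- Legendre polynomials `P_l`, normalized so that `P_l(1) = 1`, defined by the
standard three-term recurrence `(l+1) P_{l+1}(x) = (2l+1) x P_l(x) - l P_{l-1}(x)`. -/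
noncomputable def legP : ℕ → ℝ → ℝ
  | 0, _ => 1
  | 1, x => x
  | n + 2, x => ((2 * n + 3) * x * legP (n + 1) x - (n + 1) * legP n x) / (n + 2)

/-- The sequence `a^1` from the paper:
`a_l^1 = (l/(2l+1))(a_{l-1} - 2a_l + a_{l+1}) + (1/(2l+1))(a_{l+1} - a_l)`. -/
noncomputable def aone (a : ℤ → ℝ) : ℕ → ℝ := fun l =>
  ((l : ℝ) / (2 * (l : ℝ) + 1)) * (a ((l : ℤ) - 1) - 2 * a (l : ℤ) + a ((l : ℤ) + 1))
    + (1 / (2 * (l : ℝ) + 1)) * (a ((l : ℤ) + 1) - a (l : ℤ))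

noncomputable def dd : ℕ → ℝ
  | 0 => 0
  | 1 => 1
  | n + 2 => dd (n + 1) * (2 * n + 1) / (2 * n + 2)

lemma dd_nonneg : ∀ n, 0 ≤ dd n := by
  intro n
  induction n using Nat.twoStepInduction with
  | zero => norm_num [dd]
  | one => norm_num [dd]
  | more n ih1 ih2 =>
    show 0 ≤ dd (n + 1) * (2 * n + 1) / (2 * n + 2)
    apply div_nonneg (mul_nonneg ih2 (by positivity)) (by positivity)

lemma ddD (p q : ℕ) :
    ((p : ℝ) + (q : ℝ)) * dd (p + 1) * dd (q + 1)
      = ((p : ℝ) + (q : ℝ) - 1 / 2) * (dd (p + 1) * dd q + dd p * dd (q + 1))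
        - ((p : ℝ) + (q : ℝ) - 1) * (dd p * dd q) := by
  match p, q with
  | 0, 0 => norm_num [dd]
  | 0, b + 1 =>
    rw [show dd (b + 1 + 1) = dd (b + 1) * (2 * b + 1) / (2 * b + 2) from rfl,
      show dd 0 = 0 from rfl, show dd (0 + 1) = 1 from rfl]
    push_cast
    field_simp
    ring
  | a + 1, 0 =>
    rw [show dd (a + 1 + 1) = dd (a + 1) * (2 * a + 1) / (2 * a + 2) from rfl,
      show dd 0 = 0 from rfl, show dd (0 + 1) = 1 from rfl]
    push_cast
    field_simp
    ring
  | a + 1, b + 1 =>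
    rw [show dd (a + 1 + 1) = dd (a + 1) * (2 * a + 1) / (2 * a + 2) from rfl,
      show dd (b + 1 + 1) = dd (b + 1) * (2 * b + 1) / (2 * b + 2) from rfl]
    push_cast
    field_simp
    ring

noncomputable def TT (n : ℕ) (θ : ℝ) : ℝ :=
  ∑ k ∈ Finset.range (n + 1), dd (k + 1) * dd (n + 1 - k) * Real.cos (((n : ℝ) - 2 * k) * θ)

lemma legP_eq_TT (n : ℕ) (θ : ℝ) : legP n (Real.cos θ) = TT n θ := by
  induction n using Nat.twoStepInduction with
  | zero => simp [legP, TT, dd]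
  | one =>
    rw [show legP 1 (Real.cos θ) = Real.cos θ from rfl]
    rw [TT]
    rw [Finset.sum_range_succ, Finset.sum_range_succ, Finset.sum_range_zero]
    rw [show dd 1 = 1 from rfl,
      show dd 2 = 1/2 from by
        rw [show (2:ℕ) = 0 + 2 from rfl,
          show dd (0 + 2) = dd (0 + 1) * (2 * (0:ℕ) + 1) / (2 * (0:ℕ) + 2) from rfl,
          show dd (0 + 1) = 1 from rfl]; norm_num]
    push_cast
    rw [show ((1:ℝ) - 2 * 1) * θ = -(1 * θ) by ring, Real.cos_neg]
    ring
  | more n ih1 ih2 =>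
    rw [show legP (n + 2) (Real.cos θ)
        = ((2 * n + 3) * Real.cos θ * legP (n + 1) (Real.cos θ)
            - (n + 1) * legP n (Real.cos θ)) / (n + 2) from rfl,
      ih1, ih2, div_eq_iff (by positivity : ((n : ℝ) + 2) ≠ 0)]
    have hA : (2 * (n : ℝ) + 3) * Real.cos θ * TT (n + 1) θ =
        (∑ k ∈ Finset.range (n + 3),
          ((n : ℝ) + 3 / 2) * dd (k + 1) * dd (n + 2 - k) * Real.cos (((n : ℝ) + 2 - 2 * k) * θ))
        + (∑ k ∈ Finset.range (n + 3),
          ((n : ℝ) + 3 / 2) * dd k * dd (n + 3 - k) * Real.cos (((n : ℝ) + 2 - 2 * k) * θ)) := by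
      rw [TT, Finset.mul_sum]
      rw [Finset.sum_range_succ (f := fun k =>
        ((n : ℝ) + 3 / 2) * dd (k + 1) * dd (n + 2 - k) * Real.cos (((n : ℝ) + 2 - 2 * k) * θ))]
      rw [Finset.sum_range_succ' (f := fun k =>
        ((n : ℝ) + 3 / 2) * dd k * dd (n + 3 - k) * Real.cos (((n : ℝ) + 2 - 2 * k) * θ))]
      rw [show n + 2 - (n + 2) = 0 from by omega, show dd 0 = 0 from rfl]
      simp only [mul_zero, zero_mul, add_zero, zero_add]
      rw [← Finset.sum_add_distrib]
      apply Finset.sum_congr rfl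
      intro k hk
      have h2c := Real.two_mul_cos_mul_cos θ (((n : ℝ) + 1 - 2 * k) * θ)
      rw [show θ - ((n : ℝ) + 1 - 2 * k) * θ = -(((n : ℝ) - 2 * k) * θ) by ring,
        show θ + ((n : ℝ) + 1 - 2 * k) * θ = ((n : ℝ) + 2 - 2 * k) * θ by ring,
        Real.cos_neg] at h2c
      have hsub : n + 1 + 1 - k = n + 2 - k := by omega
      have hsub2 : n + 3 - (k + 1) = n + 2 - k := by omega
      rw [hsub, hsub2]
      push_cast
      rw [show ((n:ℝ) + 2 - 2 * ((k:ℝ) + 1)) * θ = ((n : ℝ) - 2 * k) * θ by ring]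
      linear_combination ((n : ℝ) + 3 / 2) * dd (k + 1) * dd (n + 2 - k) * h2c
    have hC : ((n : ℝ) + 1) * TT n θ = ∑ k ∈ Finset.range (n + 3),
        ((n : ℝ) + 1) * dd k * dd (n + 2 - k) * Real.cos (((n : ℝ) + 2 - 2 * k) * θ) := by
      rw [TT, Finset.mul_sum]
      rw [Finset.sum_range_succ' (f := fun k =>
        ((n : ℝ) + 1) * dd k * dd (n + 2 - k) * Real.cos (((n : ℝ) + 2 - 2 * k) * θ))]
      rw [show dd 0 = 0 from rfl]
      rw [Finset.sum_range_succ (f := fun k =>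
        ((n : ℝ) + 1) * dd (k + 1) * dd (n + 2 - (k + 1))
          * Real.cos (((n : ℝ) + 2 - 2 * ((k + 1 : ℕ) : ℝ)) * θ))]
      rw [show n + 2 - (n + 1 + 1) = 0 from by omega, show dd 0 = 0 from rfl]
      simp only [mul_zero, zero_mul, add_zero]
      apply Finset.sum_congr rfl
      intro k hk
      have hsub : n + 2 - (k + 1) = n + 1 - k := by omega
      rw [hsub]
      rw [show ((n:ℝ) + 2 - 2 * ((k + 1 : ℕ) : ℝ)) * θ = ((n : ℝ) - 2 * k) * θ by push_cast; ring]
      ring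
    rw [hA, hC, TT, Finset.sum_mul, ← Finset.sum_add_distrib, ← Finset.sum_sub_distrib]
    symm
    apply Finset.sum_congr rfl
    intro k hk
    have hk' : k ≤ n + 2 := by
      have := Finset.mem_range.mp hk; omega
    have h1 : n + 3 - k = (n + 2 - k) + 1 := by omega
    have h2 : ((n + 2 - k : ℕ) : ℝ) = (n : ℝ) + 2 - k := by
      rw [Nat.cast_sub hk']; push_cast; ring
    have hsub : n + 2 + 1 - k = n + 3 - k := by omega
    have hD := ddD k (n + 2 - k)
    rw [h2] at hD
    rw [hsub, h1]
    rw [show ((↑(n + 2) : ℝ) - 2 * k) * θ = ((n : ℝ) + 2 - 2 * k) * θ by push_cast; ring]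
    linear_combination Real.cos (((n : ℝ) + 2 - 2 * k) * θ) * hD

lemma legP_one : ∀ n : ℕ, legP n 1 = 1 := by
  intro n
  induction n using Nat.twoStepInduction with
  | zero => rfl
  | one => rfl
  | more n ih1 ih2 =>
    rw [show legP (n + 2) 1
        = ((2 * (n:ℝ) + 3) * 1 * legP (n + 1) 1 - ((n:ℝ) + 1) * legP n 1) / ((n:ℝ) + 2) from rfl,
      ih1, ih2, div_eq_one_iff_eq (by positivity : ((n:ℝ) + 2) ≠ 0)]
    ring

lemma abs_legP_le (n : ℕ) (θ : ℝ) : |legP n (Real.cos θ)| ≤ 1 := by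
  rw [legP_eq_TT]
  have hsum1 : ∑ k ∈ Finset.range (n + 1), dd (k + 1) * dd (n + 1 - k) = 1 := by
    have h := legP_eq_TT n 0
    rw [Real.cos_zero, legP_one, TT] at h
    simp only [mul_zero, Real.cos_zero, mul_one] at h
    exact h.symm
  calc |TT n θ| ≤ ∑ k ∈ Finset.range (n + 1), dd (k + 1) * dd (n + 1 - k) := by
        rw [TT]
        refine (Finset.abs_sum_le_sum_abs _ _).trans (Finset.sum_le_sum ?_)
        intro k _
        rw [abs_mul, abs_mul, abs_of_nonneg (dd_nonneg _), abs_of_nonneg (dd_nonneg _)]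
        have h := mul_le_mul_of_nonneg_left (Real.abs_cos_le_one (((n:ℝ) - 2 * k) * θ))
          (mul_nonneg (dd_nonneg (k + 1)) (dd_nonneg (n + 1 - k)))
        linarith [h]
    _ = 1 := hsum1

lemma legP_rec (l : ℕ) (x : ℝ) :
    (2 * (l : ℝ) + 1) * x * legP l x
      = ((l : ℝ) + 1) * legP (l + 1) x + (l : ℝ) * legP (l - 1) x := by
  cases l with
  | zero => norm_num [legP]
  | succ m =>
    rw [show legP (m + 1 + 1) x
        = ((2 * (m:ℝ) + 3) * x * legP (m + 1) x - ((m:ℝ) + 1) * legP m x) / ((m:ℝ) + 2) from rfl,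
      show m + 1 - 1 = m from rfl]
    push_cast
    field_simp
    ring

theorem stmt2 (a : ℤ → ℝ) (ha0 : a 0 = 0) (ham : a (-1) = 0)
    (hsum : Summable (fun l : ℕ => (2 * (l : ℝ) + 1) * |a (l : ℤ)|)) :
    ∀ θ : ℝ, 0 ≤ θ → θ ≤ π →
      Summable (fun l : ℕ => |a (l : ℤ) * (2 * (l : ℝ) + 1) * legP l (cos θ)|) ∧
      Summable (fun l : ℕ => |aone a l * (2 * (l : ℝ) + 1) * legP l (cos θ)|) ∧
      (cos θ - 1) * ∑' l : ℕ, a (l : ℤ) * (2 * (l : ℝ) + 1) * legP l (cos θ) =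
        ∑' l : ℕ, aone a l * (2 * (l : ℝ) + 1) * legP l (cos θ) := by
  intro θ hθ0 hθπ
  have hb : ∀ n : ℕ, |legP n (cos θ)| ≤ 1 := fun n => abs_legP_le n θ
  have habs1 : Summable (fun l : ℕ => |a (l : ℤ) * (2 * (l : ℝ) + 1) * legP l (cos θ)|) := by
    apply Summable.of_nonneg_of_le (fun l => abs_nonneg _) _ hsum
    intro l
    rw [abs_mul, abs_mul, abs_of_nonneg (by positivity : (0:ℝ) ≤ 2 * (l:ℝ) + 1)]
    have h := mul_le_mul_of_nonneg_left (hb l)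
      (mul_nonneg (abs_nonneg (a (l : ℤ))) (by positivity : (0:ℝ) ≤ 2 * (l:ℝ) + 1))
    linarith [h]
  have hf : Summable (fun l : ℕ => a (l : ℤ) * (2 * (l : ℝ) + 1) * legP l (cos θ)) :=
    summable_abs_iff.mp habs1
  have hu : Summable (fun l : ℕ => a (l : ℤ) * ((l : ℝ) + 1) * legP (l + 1) (cos θ)) := by
    rw [← summable_abs_iff]
    apply Summable.of_nonneg_of_le (fun l => abs_nonneg _) _ hsum
    intro l
    rw [abs_mul, abs_mul, abs_of_nonneg (by positivity : (0:ℝ) ≤ (l:ℝ) + 1)]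
    have h := mul_le_mul_of_nonneg_left (hb (l + 1))
      (mul_nonneg (abs_nonneg (a (l : ℤ))) (by positivity : (0:ℝ) ≤ (l:ℝ) + 1))
    have h2 : (0:ℝ) ≤ (l:ℝ) * |a (l : ℤ)| :=
      mul_nonneg (Nat.cast_nonneg l) (abs_nonneg _)
    linarith [h, h2]
  have hv : Summable (fun l : ℕ => a (l : ℤ) * (l : ℝ) * legP (l - 1) (cos θ)) := by
    rw [← summable_abs_iff]
    apply Summable.of_nonneg_of_le (fun l => abs_nonneg _) _ hsum
    intro l
    rw [abs_mul, abs_mul, abs_of_nonneg (by positivity : (0:ℝ) ≤ (l:ℝ))]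
    have h := mul_le_mul_of_nonneg_left (hb (l - 1))
      (mul_nonneg (abs_nonneg (a (l : ℤ))) (Nat.cast_nonneg l))
    have h2 : (0:ℝ) ≤ (l:ℝ) * |a (l : ℤ)| :=
      mul_nonneg (Nat.cast_nonneg l) (abs_nonneg _)
    linarith [h, h2, abs_nonneg (a (l : ℤ))]
  have hu'succ : ∀ l : ℕ, a (l : ℤ) * ((l : ℝ) + 1) * legP (l + 1) (cos θ)
      = a (((l + 1 : ℕ) : ℤ) - 1) * ((l + 1 : ℕ) : ℝ) * legP (l + 1) (cos θ) := by
    intro l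
    rw [show ((l + 1 : ℕ) : ℤ) - 1 = (l : ℤ) by push_cast; ring]
    push_cast
    ring
  have hu' : Summable (fun l : ℕ => a ((l : ℤ) - 1) * (l : ℝ) * legP l (cos θ)) := by
    apply (summable_nat_add_iff
      (f := fun l : ℕ => a ((l : ℤ) - 1) * (l : ℝ) * legP l (cos θ)) 1).mp
    exact hu.congr hu'succ
  have hvsucc : ∀ l : ℕ, a (((l + 1 : ℕ) : ℤ)) * ((l + 1 : ℕ) : ℝ) * legP (l + 1 - 1) (cos θ)
      = a ((l : ℤ) + 1) * ((l : ℝ) + 1) * legP l (cos θ) := by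
    intro l
    rw [show l + 1 - 1 = l from rfl]
    push_cast
    ring
  have hw : Summable (fun l : ℕ => a ((l : ℤ) + 1) * ((l : ℝ) + 1) * legP l (cos θ)) := by
    have := (summable_nat_add_iff
      (f := fun l : ℕ => a (l : ℤ) * (l : ℝ) * legP (l - 1) (cos θ)) 1).mpr hv
    exact this.congr hvsucc
  have key1 : cos θ * ∑' l : ℕ, a (l : ℤ) * (2 * (l : ℝ) + 1) * legP l (cos θ)
      = (∑' l : ℕ, a (l : ℤ) * ((l : ℝ) + 1) * legP (l + 1) (cos θ))
        + ∑' l : ℕ, a (l : ℤ) * (l : ℝ) * legP (l - 1) (cos θ) := by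
    rw [← tsum_mul_left, ← Summable.tsum_add hu hv]
    apply tsum_congr
    intro l
    have hr := legP_rec l (cos θ)
    linear_combination a (l : ℤ) * hr
  have key2 : ∑' l : ℕ, a ((l : ℤ) - 1) * (l : ℝ) * legP l (cos θ)
      = ∑' l : ℕ, a (l : ℤ) * ((l : ℝ) + 1) * legP (l + 1) (cos θ) := by
    rw [Summable.tsum_eq_zero_add hu']
    have h0 : a (((0:ℕ) : ℤ) - 1) * ((0:ℕ) : ℝ) * legP 0 (cos θ) = 0 := by norm_num
    rw [h0, zero_add]
    exact (tsum_congr fun l => (hu'succ l).symm)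
  have key3 : ∑' l : ℕ, a (l : ℤ) * (l : ℝ) * legP (l - 1) (cos θ)
      = ∑' l : ℕ, a ((l : ℤ) + 1) * ((l : ℝ) + 1) * legP l (cos θ) := by
    rw [Summable.tsum_eq_zero_add hv]
    have h0 : a ((0:ℕ) : ℤ) * ((0:ℕ) : ℝ) * legP (0 - 1) (cos θ) = 0 := by norm_num
    rw [h0, zero_add]
    exact (tsum_congr hvsucc)
  have hterm : ∀ l : ℕ,
      a ((l : ℤ) - 1) * (l : ℝ) * legP l (cos θ)
        + a ((l : ℤ) + 1) * ((l : ℝ) + 1) * legP l (cos θ)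
        - a (l : ℤ) * (2 * (l : ℝ) + 1) * legP l (cos θ)
      = aone a l * (2 * (l : ℝ) + 1) * legP l (cos θ) := by
    intro l
    have hl : (2 * (l:ℝ) + 1) ≠ 0 := by positivity
    simp only [aone]
    field_simp
    ring
  have key : (cos θ - 1) * ∑' l : ℕ, a (l : ℤ) * (2 * (l : ℝ) + 1) * legP l (cos θ)
      = ∑' l : ℕ, (a ((l : ℤ) - 1) * (l : ℝ) * legP l (cos θ)
          + a ((l : ℤ) + 1) * ((l : ℝ) + 1) * legP l (cos θ)
          - a (l : ℤ) * (2 * (l : ℝ) + 1) * legP l (cos θ)) := by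
    rw [sub_mul, one_mul, key1, ← key2, key3, ← Summable.tsum_add hu' hw, ← Summable.tsum_sub (hu'.add hw) hf]
  refine ⟨habs1, ?_, ?_⟩
  · rw [summable_abs_iff]
    exact ((hu'.add hw).sub hf).congr hterm
  · rw [key]
    exact tsum_congr hterm
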